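/- Consider the Korteweg–de Vries semidiscretization u̇ₖ = (α/2h)[θ(u_{k+1}² − u_{k−1}²) + 2(1−θ)uₖ(u_{k+1} − u_{k−1})] + (ν/2h³)(u_{k+2} − 2u_{k+1} + 2u_{k−1} − u_{k−2}). The density ρₖ = uₖ² satisfies a semidiscrete local conservation law ρ̇ₖ = (Jₖ − J_{k+1})/h for some flux J depending on finitely many neighboring values (i.e., d/dt uₖ² is a telescoping difference of a local flux) if and only if θ = 2/3. -/

import Mathlib

lemma tanh_aux (lam t : ℝ) :
    HasDerivAt (fun τ => Real.sinh (lam*τ) / Real.cosh (lam*τ))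
      (lam * (1 - (Real.sinh (lam*t) / Real.cosh (lam*t))^2)) t := by
  have hc : Real.cosh (lam*t) ≠ 0 := (Real.cosh_pos _).ne'
  have h1 : HasDerivAt (fun τ : ℝ => lam*τ) lam t := by
    simpa using (hasDerivAt_id t).const_mul lam
  have hs : HasDerivAt (fun τ => Real.sinh (lam*τ)) (Real.cosh (lam*t) * lam) t :=
    (Real.hasDerivAt_sinh _).comp t h1
  have hco : HasDerivAt (fun τ => Real.cosh (lam*τ)) (Real.sinh (lam*t) * lam) t :=
    (Real.hasDerivAt_cosh _).comp t h1
  have := hs.div hco hc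
  refine this.congr_deriv ?_
  field_simp

set_option maxHeartbeats 2000000 in
/-- the KdV semidiscretization
`u̇ₖ = (α/2h)[θ(u_{k+1}² − u_{k−1}²) + 2(1−θ)uₖ(u_{k+1} − u_{k−1})]
      + (ν/2h³)(u_{k+2} − 2u_{k+1} + 2u_{k−1} − u_{k−2})`
admits a semidiscrete local conservation law with density `ρₖ = uₖ²`, i.e.
`d/dt(uₖ²) = (Jₖ − J_{k+1})/h` for some flux `J` depending on finitely many
consecutive grid values, if and only if `θ = 2/3`. -/
theorem kdv_quadratic_conservation_iff
    (h α ν θ : ℝ) (hh : 0 < h) (hα : α ≠ 0) :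
    (∃ (r s : ℕ) (J : (Fin (r + s + 1) → ℝ) → ℝ),
      ∀ u : ℝ → ℤ → ℝ,
        (∀ (t : ℝ) (k : ℤ),
          HasDerivAt (fun τ => u τ k)
            ((α / (2 * h)) * (θ * ((u t (k+1)) ^ 2 - (u t (k-1)) ^ 2)
                + 2 * (1 - θ) * u t k * (u t (k+1) - u t (k-1)))
              + (ν / (2 * h ^ 3))
                  * (u t (k+2) - 2 * u t (k+1) + 2 * u t (k-1) - u t (k-2))) t) →
        ∀ (t : ℝ) (k : ℤ),
          HasDerivAt (fun τ => (u τ k) ^ 2)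
            ((J (fun j => u t (k - (r : ℤ) + (j : ℕ)))
              - J (fun j => u t (k - (r : ℤ) + 1 + (j : ℕ)))) / h) t)
    ↔ θ = 2 / 3 := by
  constructor
  · rintro ⟨r, s, J, hJ⟩
    have hhne : h ≠ 0 := hh.ne'
    set lam : ℝ := α * (3*θ - 2) / (2*h) with hlam
    set p : ℝ := 3*ν/(α*h^2) - 2*(1-θ) with hp
    set cc : ℝ := 1 + p/2 with hcc
    set T : ℝ → ℝ := fun t => Real.sinh (lam*t) / Real.cosh (lam*t) with hT
    set a : ℝ → ℝ := fun t => p/2 - T t with ha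
    set b : ℝ → ℝ := fun t => p/2 + T t with hb
    set u : ℝ → ℤ → ℝ := fun t k => if k % 3 = 0 then a t else if k % 3 = 1 then b t else cc with hu
    have hTd : ∀ t, HasDerivAt T (lam * (1 - T t ^2)) t := fun t => tanh_aux lam t
    have had : ∀ t, HasDerivAt a (-(lam * (1 - T t^2))) t := fun t => (hTd t).const_sub (p/2)
    have hbd : ∀ t, HasDerivAt b (lam * (1 - T t^2)) t := fun t => (hTd t).const_add (p/2)
    clear_value lam p cc T a b u
    have key : ∀ (t : ℝ) (k : ℤ),
        HasDerivAt (fun τ => u τ k)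
          ((α / (2 * h)) * (θ * ((u t (k+1)) ^ 2 - (u t (k-1)) ^ 2)
              + 2 * (1 - θ) * u t k * (u t (k+1) - u t (k-1)))
            + (ν / (2 * h ^ 3))
                * (u t (k+2) - 2 * u t (k+1) + 2 * u t (k-1) - u t (k-2))) t := by
      intro t k
      have h3 : k % 3 = 0 ∨ k % 3 = 1 ∨ k % 3 = 2 := by omega
      rcases h3 with h3 | h3 | h3
      · have e1 : (k+1) % 3 = 1 := by omega
        have e2 : (k-1) % 3 = 2 := by omega
        have e3 : (k+2) % 3 = 2 := by omega
        have e4 : (k-2) % 3 = 1 := by omega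
        simp only [hu, h3, e1, e2, e3, e4]
        norm_num
        convert had t using 1
        simp only [ha, hb, hcc, hlam, hp]
        field_simp
        ring
      · have e1 : (k+1) % 3 = 2 := by omega
        have e2 : (k-1) % 3 = 0 := by omega
        have e3 : (k+2) % 3 = 0 := by omega
        have e4 : (k-2) % 3 = 2 := by omega
        simp only [hu, h3, e1, e2, e3, e4]
        norm_num
        convert hbd t using 1
        simp only [ha, hb, hcc, hlam, hp]
        field_simp
        ring
      · have e1 : (k+1) % 3 = 0 := by omega
        have e2 : (k-1) % 3 = 1 := by omega
        have e3 : (k+2) % 3 = 1 := by omega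
        have e4 : (k-2) % 3 = 0 := by omega
        simp only [hu, h3, e1, e2, e3, e4]
        norm_num
        refine (hasDerivAt_const t cc).congr_deriv ?_
        simp only [ha, hb, hcc, hlam, hp]
        field_simp
        ring
    have concl := hJ u key
    have main : ∀ t : ℝ, 4 * lam * T t * (1 - T t ^ 2) = 0 := by
      intro t
      have d0 : HasDerivAt (fun τ => (u τ 0)^2) (2 * a t * -(lam*(1 - T t^2))) t := by
        have hf : (fun τ => (u τ (0:ℤ))^2) = fun τ => (a τ)^2 := by
          funext τ; simp only [hu]; norm_num
        rw [hf]
        have := (had t).pow 2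
        refine this.congr_deriv ?_
        push_cast; ring
      have d1 : HasDerivAt (fun τ => (u τ 1)^2) (2 * b t * (lam*(1 - T t^2))) t := by
        have hf : (fun τ => (u τ (1:ℤ))^2) = fun τ => (b τ)^2 := by
          funext τ; simp only [hu]; norm_num
        rw [hf]
        have := (hbd t).pow 2
        refine this.congr_deriv ?_
        push_cast; ring
      have d2 : HasDerivAt (fun τ => (u τ 2)^2) (0:ℝ) t := by
        have hf : (fun τ => (u τ (2:ℤ))^2) = fun τ => cc^2 := by
          funext τ; simp only [hu]; norm_num
        rw [hf]
        exact hasDerivAt_const t _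
      have A1 : (fun j : Fin (r+s+1) => u t (0 - (r:ℤ) + 1 + (j:ℕ))) =
          (fun j : Fin (r+s+1) => u t (1 - (r:ℤ) + (j:ℕ))) := by
        funext j; congr 1; ring
      have A2 : (fun j : Fin (r+s+1) => u t (1 - (r:ℤ) + 1 + (j:ℕ))) =
          (fun j : Fin (r+s+1) => u t (2 - (r:ℤ) + (j:ℕ))) := by
        funext j; congr 1; ring
      have A3 : (fun j : Fin (r+s+1) => u t (2 - (r:ℤ) + 1 + (j:ℕ))) =
          (fun j : Fin (r+s+1) => u t (0 - (r:ℤ) + (j:ℕ))) := by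
        funext j
        simp only [hu]
        have e : (2 - (r:ℤ) + 1 + (j:ℕ)) % 3 = (0 - (r:ℤ) + (j:ℕ)) % 3 := by omega
        rw [e]
      have e0 := (concl t 0).unique d0
      have e1 := (concl t 1).unique d1
      have e2 := (concl t 2).unique d2
      rw [A1] at e0
      rw [A2] at e1
      rw [A3] at e2
      have f0 := (div_eq_iff hhne).mp e0
      have f1 := (div_eq_iff hhne).mp e1
      have f2 := (div_eq_iff hhne).mp e2
      simp only [ha, hb] at f0 f1
      have hcomb2 : (4*lam*T t*(1 - T t^2)) * h = 0 := by
        linear_combination -f0 - f1 - f2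
      rcases mul_eq_zero.mp hcomb2 with h5 | h5
      · exact h5
      · exact absurd h5 hhne
    have hlam0 : lam = 0 := by
      by_contra hl
      have h4 := main (1/lam)
      have hT1 : T (1/lam) = Real.sinh 1 / Real.cosh 1 := by
        rw [hT]
        simp only []
        rw [mul_one_div, div_self hl]
      rw [hT1] at h4
      have hs1 : 0 < Real.sinh 1 := Real.sinh_pos_iff.mpr one_pos
      have hc1 : 0 < Real.cosh 1 := Real.cosh_pos 1
      have hq : 0 < 1 - (Real.sinh 1 / Real.cosh 1)^2 := by
        have hpy := Real.cosh_sq_sub_sinh_sq 1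
        rw [div_pow]
        rw [sub_pos, div_lt_one (by positivity)]
        nlinarith
      have hTpos : 0 < Real.sinh 1 / Real.cosh 1 := by positivity
      rcases mul_eq_zero.mp h4 with h5 | h5
      · rcases mul_eq_zero.mp h5 with h6 | h6
        · rcases mul_eq_zero.mp h6 with h7 | h7
          · norm_num at h7
          · exact hl h7
        · exact hTpos.ne' h6
      · exact hq.ne' h5
    rw [hlam] at hlam0
    have h2h : (2*h) ≠ 0 := by positivity
    rw [div_eq_zero_iff] at hlam0
    rcases hlam0 with h5 | h5
    · rcases mul_eq_zero.mp h5 with h6 | h6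
      · exact absurd h6 hα
      · linarith
    · exact absurd h5 h2h
  · intro hθ
    subst hθ
    refine ⟨2, 1, fun v => -(2*α/3) * (v ⟨1, by omega⟩ * (v ⟨2, by omega⟩)^2 + (v ⟨1, by omega⟩)^2 * v ⟨2, by omega⟩)
        - (ν/h^2) * (v ⟨0, by omega⟩ * v ⟨2, by omega⟩ + v ⟨1, by omega⟩ * v ⟨3, by omega⟩
            - 2 * v ⟨1, by omega⟩ * v ⟨2, by omega⟩), ?_⟩
    intro u hu t k
    have H2 := (hu t k).pow 2
    refine H2.congr_deriv ?_
    simp only []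
    push_cast
    ring_nf
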